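/- For 0<q<1, N a natural number, and m = \lfloor N/2 \rfloor, one has \sum_{k=0}^{N} \binom{N}{k}_q q^{k^2 - kN} = \frac{1}{2\pi i} \oint_C F(z) (-q^{-N+1/2}/z ; q)_N \frac{dz}{z}, where C is a positively oriented circle around the origin and F(z) = \sum_{k\in\mathbb{Z}} q^{k^2/2} z^k. -/

import Mathlib

open Real Finset

/-- q-Pochhammer symbol (x;q)_m over ℝ. -/
noncomputable def qPoch (q x : ℝ) (m : ℕ) : ℝ := ∏ j ∈ Finset.range m, (1 - x * q ^ j)

/-- Gaussian (q-)binomial coefficient. -/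
noncomputable def qbinom (q : ℝ) (n k : ℕ) : ℝ :=
  qPoch q q n / (qPoch q q k * qPoch q q (n - k))

/-- q-Pochhammer symbol (x;q)_m over ℂ. -/
noncomputable def qPochC (q x : ℂ) (m : ℕ) : ℂ := ∏ j ∈ Finset.range m, (1 - x * q ^ j)

/-- F(z) = ∑_{k∈ℤ} q^{k²/2} z^k. -/
noncomputable def Fq (q : ℝ) (z : ℂ) : ℂ :=
  ∑' k : ℤ, ((q ^ ((k : ℝ) ^ 2 / 2) : ℝ) : ℂ) * z ^ k

open Filter intervalIntegral MeasureTheory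

lemma qPoch_succ (q x : ℝ) (m : ℕ) : qPoch q x (m + 1) = qPoch q x m * (1 - x * q ^ m) :=
  Finset.prod_range_succ _ _

lemma qPochC_succ (q x : ℂ) (m : ℕ) : qPochC q x (m + 1) = qPochC q x m * (1 - x * q ^ m) :=
  Finset.prod_range_succ _ _

lemma qPoch_pos {q : ℝ} (hq0 : 0 < q) (hq1 : q < 1) (m : ℕ) : 0 < qPoch q q m := by
  refine Finset.prod_pos fun j _ => ?_
  have : q * q ^ j < 1 := by
    calc q * q ^ j ≤ q * 1 := by
          exact mul_le_mul_of_nonneg_left (pow_le_one₀ hq0.le hq1.le) hq0.le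
    _ < 1 := by linarith
  linarith

lemma qPoch_ne {q : ℝ} (hq0 : 0 < q) (hq1 : q < 1) (m : ℕ) : qPoch q q m ≠ 0 :=
  (qPoch_pos hq0 hq1 m).ne'

lemma qbinom_zero (q : ℝ) {n : ℕ} (h : qPoch q q n ≠ 0) : qbinom q n 0 = 1 := by
  simp [qbinom, qPoch, h]
  simpa [qPoch] using h

lemma qbinom_self (q : ℝ) {n : ℕ} (h : qPoch q q n ≠ 0) : qbinom q n n = 1 := by
  simp [qbinom, qPoch]
  simpa [qPoch] using h

lemma pascal {q : ℝ} (hq0 : 0 < q) (hq1 : q < 1) (k d : ℕ) :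
    qbinom q (k + 1 + d + 1) (k + 1) = qbinom q (k + 1 + d) (k + 1)
      + q ^ (d + 1) * qbinom q (k + 1 + d) k := by
  have h1 : k + 1 + d + 1 - (k + 1) = d + 1 := by omega
  have h2 : k + 1 + d - (k + 1) = d := by omega
  have h3 : k + 1 + d - k = d + 1 := by omega
  have e1 : qPoch q q (k + 1 + d + 1) = qPoch q q (k + 1 + d) * (1 - q * q ^ (k + 1 + d)) :=
    qPoch_succ q q _
  have e2 : qPoch q q (k + 1) = qPoch q q k * (1 - q * q ^ k) := qPoch_succ q q _
  have e3 : qPoch q q (d + 1) = qPoch q q d * (1 - q * q ^ d) := qPoch_succ q q _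
  have hk := qPoch_ne hq0 hq1 k
  have hd := qPoch_ne hq0 hq1 d
  have hn := qPoch_ne hq0 hq1 (k + 1 + d)
  have hqk : (1 : ℝ) - q * q ^ k ≠ 0 := by
    have := qPoch_pos hq0 hq1 (k + 1); rw [e2] at this; intro h; rw [h] at this; simp at this
  have hqd : (1 : ℝ) - q * q ^ d ≠ 0 := by
    have := qPoch_pos hq0 hq1 (d + 1); rw [e3] at this; intro h; rw [h] at this; simp at this
  rw [qbinom, qbinom, qbinom, h1, h2, h3, e1, e2, e3]
  field_simp
  ring

/-- coefficient in q-binomial theorem -/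
noncomputable def qcoef (q : ℝ) (n k : ℕ) : ℂ :=
  ((qbinom q n k : ℝ) : ℂ) * (q : ℂ) ^ (k.choose 2)

lemma qbinom_thm {q : ℝ} (hq0 : 0 < q) (hq1 : q < 1) (n : ℕ) (w : ℂ) :
    qPochC (q : ℂ) w n = ∑ k ∈ Finset.range (n + 1), qcoef q n k * (-w) ^ k := by
  induction n with
  | zero =>
      simp [qPochC, qcoef, qbinom_zero q (qPoch_ne hq0 hq1 0)]
  | succ n ih =>
      have key : ∀ k, k < n → qcoef q (n + 1) (k + 1)
          = qcoef q n (k + 1) + (q : ℂ) ^ n * qcoef q n k := by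
        intro k hk
        obtain ⟨d, rfl⟩ : ∃ d, n = k + 1 + d := ⟨n - k - 1, by omega⟩
        unfold qcoef
        have := pascal hq0 hq1 k d
        rw [show k + 1 + d + 1 = k + 1 + (d + 1) by ring] at this ⊢
        push_cast [this]
        have hc : (k + 1).choose 2 = k.choose 2 + k := by
          rw [Nat.choose_succ_succ]; simp [Nat.choose_one_right, Nat.add_comm]
        rw [hc]
        ring
      rw [qPochC_succ, ih, mul_sub, mul_one]
      have hT : (∑ k ∈ Finset.range (n + 1), qcoef q n k * (-w) ^ k) * (w * (q:ℂ) ^ n)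
          = -∑ k ∈ Finset.range (n + 1), (q:ℂ) ^ n * qcoef q n k * (-w) ^ (k + 1) := by
        rw [Finset.sum_mul, ← Finset.sum_neg_distrib]
        refine Finset.sum_congr rfl fun k _ => ?_
        ring
      rw [hT, sub_neg_eq_add]
      rw [Finset.sum_range_succ' (fun k => qcoef q (n + 1) k * (-w) ^ k) (n + 1)]
      rw [Finset.sum_range_succ (fun k => qcoef q (n + 1) (k + 1) * (-w) ^ (k + 1)) n]
      rw [Finset.sum_range_succ' (fun k => qcoef q n k * (-w) ^ k) n]
      rw [Finset.sum_range_succ (fun k => (q:ℂ) ^ n * qcoef q n k * (-w) ^ (k + 1)) n]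
      have h0 : qcoef q (n + 1) 0 = qcoef q n 0 := by
        unfold qcoef
        rw [qbinom_zero q (qPoch_ne hq0 hq1 (n+1)), qbinom_zero q (qPoch_ne hq0 hq1 n)]
      have htop : qcoef q (n + 1) (n + 1) = (q:ℂ) ^ n * qcoef q n n := by
        unfold qcoef
        rw [qbinom_self q (qPoch_ne hq0 hq1 (n+1)), qbinom_self q (qPoch_ne hq0 hq1 n)]
        have : (n + 1).choose 2 = n.choose 2 + n := by
          rw [Nat.choose_succ_succ]; simp [Nat.choose_one_right, Nat.add_comm]
        rw [this]; push_cast; ring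
      have hmid : ∑ k ∈ Finset.range n, qcoef q (n+1) (k+1) * (-w)^(k+1)
          = ∑ k ∈ Finset.range n, (qcoef q n (k+1) + (q:ℂ)^n * qcoef q n k) * (-w)^(k+1) :=
        Finset.sum_congr rfl fun k hk => by rw [key k (Finset.mem_range.mp hk)]
      rw [hmid, h0, htop]
      simp only [add_mul, Finset.sum_add_distrib]
      ring

lemma sumA {q : ℝ} (hq0 : 0 < q) (hq1 : q < 1) {s : ℝ} (hs : 0 < s) :
    Summable (fun m : ℤ => q ^ ((m : ℝ) ^ 2 / 2) * s ^ m) := by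
  have base : ∀ t : ℝ, 0 < t → Summable (fun n : ℕ => q ^ ((n : ℝ) ^ 2 / 2) * t ^ n) := by
    intro t ht
    apply summable_of_ratio_norm_eventually_le (r := 1/2) (by norm_num)
    have hten : Tendsto (fun n : ℕ => q ^ ((n : ℝ) + 1 / 2) * t) atTop (nhds 0) := by
      have h1 : Tendsto (fun n : ℕ => q ^ ((n : ℝ) + 1 / 2)) atTop (nhds 0) := by
        have := tendsto_rpow_atTop_of_base_lt_one q (by linarith) hq1
        exact (this.comp (tendsto_atTop_add_const_right _ (1/2 : ℝ)
          (tendsto_natCast_atTop_atTop)))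
      simpa using h1.mul_const t
    filter_upwards [hten.eventually_le_const (by norm_num : (0:ℝ) < 1/2)] with n hn
    have hpos : 0 < q ^ ((n : ℝ) ^ 2 / 2) * t ^ n :=
      mul_pos (rpow_pos_of_pos hq0 _) (pow_pos ht n)
    have hpos' : 0 < q ^ (((n : ℝ) + 1) ^ 2 / 2) * t ^ (n + 1) :=
      mul_pos (rpow_pos_of_pos hq0 _) (pow_pos ht _)
    push_cast
    rw [Real.norm_of_nonneg hpos'.le, Real.norm_of_nonneg hpos.le]
    have hEq : q ^ (((n : ℝ) + 1) ^ 2 / 2) * t ^ (n + 1)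
        = (q ^ ((n : ℝ) + 1/2) * t) * (q ^ ((n : ℝ) ^ 2 / 2) * t ^ n) := by
      rw [show (((n : ℝ) + 1) ^ 2 / 2) = ((n : ℝ) + 1/2) + (n : ℝ) ^ 2 / 2 by ring,
        Real.rpow_add hq0, pow_succ]
      ring
    rw [hEq]
    have h0 : (0:ℝ) ≤ q ^ ((n : ℝ) + 1/2) * t := le_of_lt (mul_pos (rpow_pos_of_pos hq0 _) ht)
    calc q ^ ((n : ℝ) + 1/2) * t * (q ^ ((n : ℝ) ^ 2 / 2) * t ^ n)
        ≤ (1/2) * (q ^ ((n : ℝ) ^ 2 / 2) * t ^ n) := by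
          exact mul_le_mul_of_nonneg_right hn hpos.le
      _ = 1/2 * (q ^ ((n : ℝ) ^ 2 / 2) * t ^ n) := by ring
  apply Summable.of_nat_of_neg
  · have := base s hs
    refine this.congr fun n => ?_
    simp [zpow_natCast]
  · have := base s⁻¹ (inv_pos.mpr hs)
    refine this.congr fun n => ?_
    rw [zpow_neg, zpow_natCast, ← inv_pow]
    push_cast
    ring_nf

lemma norm_term {q r : ℝ} (hq0 : 0 < q) (hr : 0 < r) (m : ℤ) (θ : ℝ) :
    ‖((q ^ ((m : ℝ) ^ 2 / 2) : ℝ) : ℂ) * circleMap 0 r θ ^ m‖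
      = q ^ ((m : ℝ) ^ 2 / 2) * r ^ m := by
  rw [norm_mul, norm_zpow, Complex.norm_real, norm_circleMap_zero,
    _root_.abs_of_pos hr, Real.norm_of_nonneg (Real.rpow_pos_of_pos hq0 _).le]

lemma summable_on_circle {q r : ℝ} (hq0 : 0 < q) (hq1 : q < 1) (hr : 0 < r) (θ : ℝ) :
    Summable (fun m : ℤ => ((q ^ ((m : ℝ) ^ 2 / 2) : ℝ) : ℂ) * circleMap 0 r θ ^ m) := by
  apply Summable.of_norm
  exact (sumA hq0 hq1 hr).congr fun m => (norm_term hq0 hr m θ).symm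

lemma key {q r : ℝ} (hq0 : 0 < q) (hq1 : q < 1) (hr : 0 < r) (k : ℤ) :
    (∮ z in C(0, r), Fq q z * z ^ (-k - 1))
      = (2 * Real.pi * Complex.I) * ((q ^ ((k : ℝ) ^ 2 / 2) : ℝ) : ℂ) := by
  set a : ℤ → ℝ := fun m => q ^ ((m : ℝ) ^ 2 / 2) with ha
  have hz : ∀ θ : ℝ, circleMap 0 r θ ≠ 0 := fun θ => circleMap_ne_center hr.ne'
  set F : ℤ → ℝ → ℂ := fun m θ =>
    deriv (circleMap 0 r) θ • (((a m : ℝ) : ℂ) * circleMap 0 r θ ^ (m - k - 1)) with hF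
  have hbsum : Summable (fun m : ℤ => r * (a m * r ^ (m - k - 1))) := by
    have h1 : Summable (fun m : ℤ => a m * r ^ (m : ℤ)) := sumA hq0 hq1 hr
    refine ((h1.mul_right (r ^ (-k - 1))).mul_left r).congr fun m => ?_
    rw [mul_assoc, ← zpow_add₀ hr.ne']
    ring_nf
  have hHS : HasSum (fun m : ℤ => ∫ θ in (0:ℝ)..(2 * Real.pi), F m θ)
      (∮ z in C(0, r), Fq q z * z ^ (-k - 1)) := by
    rw [circleIntegral]
    apply intervalIntegral.hasSum_integral_of_dominated_convergence
      (bound := fun m _ => r * (a m * r ^ (m - k - 1)))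
    · intro m
      apply Continuous.aestronglyMeasurable
      simp only [hF, deriv_circleMap]
      exact ((continuous_circleMap 0 r).mul continuous_const).smul
        (continuous_const.mul ((continuous_circleMap 0 r).zpow₀ _ fun θ => Or.inl (hz θ)))
    · intro m
      filter_upwards with θ _
      simp only [hF, norm_smul, deriv_circleMap, norm_mul,
        norm_circleMap_zero, Complex.norm_I, _root_.abs_of_pos hr, mul_one]
      rw [norm_zpow, norm_circleMap_zero, _root_.abs_of_pos hr, Complex.norm_real, Real.norm_eq_abs,
        _root_.abs_of_pos (Real.rpow_pos_of_pos hq0 _)]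
    · filter_upwards with θ _
      exact hbsum
    · exact intervalIntegrable_const
    · filter_upwards with θ _
      have hS := (summable_on_circle hq0 hq1 hr θ).hasSum
      have : Fq q (circleMap 0 r θ) = ∑' m : ℤ, ((a m : ℝ) : ℂ) * circleMap 0 r θ ^ m := rfl
      rw [this]
      have h2 := (hS.mul_right (circleMap 0 r θ ^ (-k - 1))).const_smul
        (deriv (circleMap 0 r) θ)
      refine HasSum.congr_fun h2 ?_
      intro m
      simp only [hF, ha]
      rw [mul_assoc, ← zpow_add₀ (hz θ)]
      ring_nf
  have hval : ∀ m : ℤ, (∫ θ in (0:ℝ)..(2 * Real.pi), F m θ)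
      = if m = k then ((a k : ℝ) : ℂ) * (2 * Real.pi * Complex.I) else 0 := by
    intro m
    have hdef : (∫ θ in (0:ℝ)..(2 * Real.pi), F m θ)
        = ∮ z in C(0, r), ((a m : ℝ) : ℂ) * z ^ (m - k - 1) := rfl
    have hsmul : (∮ z in C(0, r), ((a m : ℝ) : ℂ) * z ^ (m - k - 1))
        = ((a m : ℝ) : ℂ) * ∮ z in C(0, r), z ^ (m - k - 1) := by
      simpa [smul_eq_mul] using
        circleIntegral.integral_smul (((a m : ℝ)) : ℂ) (fun z => z ^ (m - k - 1)) 0 r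
    rw [hdef, hsmul]
    by_cases hm : m = k
    · subst hm
      have h0 : (0 : ℂ) ∈ Metric.ball (0 : ℂ) r := by simpa using hr
      have h1 := circleIntegral.integral_sub_inv_of_mem_ball h0
      have h2 : (∮ z in C(0, r), z ^ (m - m - 1)) = ∮ z in C(0, r), (z - 0)⁻¹ := by
        apply circleIntegral.integral_congr hr.le
        intro z _
        simp [zpow_sub₀, zpow_neg]
      rw [if_pos rfl, h2, h1]
    · have hn : m - k - 1 ≠ -1 := by omega
      have h1 := circleIntegral.integral_sub_zpow_of_ne hn 0 0 r
      simp only [sub_zero] at h1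
      rw [if_neg hm, h1, mul_zero]
  have h3 : HasSum (fun m : ℤ => if m = k then ((a k : ℝ) : ℂ) * (2 * Real.pi * Complex.I) else 0)
      (((a k : ℝ) : ℂ) * (2 * Real.pi * Complex.I)) := hasSum_ite_eq k _
  have h4 := hHS.unique (by rw [funext hval] at hHS ⊢; exact h3)
  rw [h4]
  ring

lemma contFq {q r : ℝ} (hq0 : 0 < q) (hq1 : q < 1) (hr : 0 < r) :
    Continuous (fun θ : ℝ => Fq q (circleMap 0 r θ)) := by
  have hz : ∀ θ : ℝ, circleMap 0 r θ ≠ 0 := fun θ => circleMap_ne_center hr.ne'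
  apply continuous_tsum
    (f := fun (m : ℤ) (θ : ℝ) => ((q ^ ((m : ℝ) ^ 2 / 2) : ℝ) : ℂ) * circleMap 0 r θ ^ m)
    (u := fun m : ℤ => q ^ ((m : ℝ) ^ 2 / 2) * r ^ m)
  · intro m
    exact continuous_const.mul ((continuous_circleMap 0 r).zpow₀ _ fun θ => Or.inl (hz θ))
  · exact sumA hq0 hq1 hr
  · intro m θ
    exact (norm_term hq0 hr m θ).le

lemma circleIntegral_finset_sum {ι : Type*} (s : Finset ι) (f : ι → ℂ → ℂ) (c : ℂ) (R : ℝ)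
    (h : ∀ i ∈ s, CircleIntegrable (f i) c R) :
    (∮ z in C(c, R), ∑ i ∈ s, f i z) = ∑ i ∈ s, ∮ z in C(c, R), f i z := by
  simp only [circleIntegral, Finset.smul_sum]
  rw [intervalIntegral.integral_finset_sum]
  intro i hi
  exact (h i hi).out


theorem stmt11 (q : ℝ) (hq0 : 0 < q) (hq1 : q < 1) (N : ℕ) (r : ℝ) (hr : 0 < r) :
    (∑ k ∈ Finset.range (N + 1), ((qbinom q N k : ℝ) : ℂ) * (q : ℂ) ^ ((k : ℤ) ^ 2 - k * N)) =
      (2 * Real.pi * Complex.I)⁻¹ *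
        ∮ z in C(0, r),
          Fq q z * qPochC (q : ℂ) (-(((q ^ (-(N : ℝ) + 1 / 2) : ℝ) : ℂ)) / z) N / z := by
  set X : ℝ := q ^ (-(N : ℝ) + 1 / 2) with hXdef
  have hX : 0 < X := Real.rpow_pos_of_pos hq0 _
  set c : ℕ → ℂ := fun k => qcoef q N k * ((X ^ k : ℝ) : ℂ) with hc
  -- Step 1: rewrite integrand on the circle
  have step1 : (∮ z in C(0, r),
        Fq q z * qPochC (q : ℂ) (-(((X : ℝ) : ℂ)) / z) N / z)
      = ∮ z in C(0, r), ∑ k ∈ Finset.range (N + 1),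
          c k * (Fq q z * z ^ (-(k : ℤ) - 1)) := by
    apply circleIntegral.integral_congr hr.le
    intro z hz
    have hz0 : z ≠ 0 := by
      intro h
      rw [h] at hz
      simp [Metric.mem_sphere] at hz
      exact hr.ne hz
    show Fq q z * qPochC (q : ℂ) (-((X : ℝ) : ℂ) / z) N / z
      = ∑ k ∈ Finset.range (N + 1), c k * (Fq q z * z ^ (-(k : ℤ) - 1))
    rw [qbinom_thm hq0 hq1 N (-((X : ℂ)) / z)]
    rw [Finset.mul_sum, Finset.sum_div]
    refine Finset.sum_congr rfl fun k _ => ?_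
    have hw : -(-((X : ℂ)) / z) = (X : ℂ) / z := by ring
    have hzp : (z : ℂ) ^ (-(k : ℤ) - 1) = (z ^ k)⁻¹ * z⁻¹ := by
      rw [zpow_sub₀ hz0, zpow_neg, zpow_natCast, zpow_one, div_eq_mul_inv]
    simp only [hc]
    rw [hw, div_pow, hzp, Complex.ofReal_pow, div_eq_mul_inv, div_eq_mul_inv]
    ring
  rw [step1]
  -- Step 2: exchange finite sum and integral
  have hint : ∀ k : ℕ, k ∈ Finset.range (N + 1) → CircleIntegrable
      (fun z => c k * (Fq q z * z ^ (-(k : ℤ) - 1))) 0 r := by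
    intro k _
    rw [circleIntegrable_iff]
    apply Continuous.intervalIntegrable
    simp only [deriv_circleMap]
    refine ((continuous_circleMap 0 r).mul continuous_const).smul
      (continuous_const.mul ((contFq hq0 hq1 hr).mul ?_))
    exact (continuous_circleMap 0 r).zpow₀ _ fun θ =>
      Or.inl (circleMap_ne_center hr.ne')
  have step2 : (∮ z in C(0, r), ∑ k ∈ Finset.range (N + 1),
        c k * (Fq q z * z ^ (-(k : ℤ) - 1)))
      = ∑ k ∈ Finset.range (N + 1), ∮ z in C(0, r), c k * (Fq q z * z ^ (-(k : ℤ) - 1)) :=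
    circleIntegral_finset_sum _ _ _ _ hint
  rw [step2]
  -- Step 3: evaluate each integral
  have step3 : ∀ k : ℕ, (∮ z in C(0, r), c k * (Fq q z * z ^ (-(k : ℤ) - 1)))
      = c k * ((2 * Real.pi * Complex.I) * ((q ^ ((k : ℝ) ^ 2 / 2) : ℝ) : ℂ)) := by
    intro k
    have := circleIntegral.integral_smul (c k) (fun z => Fq q z * z ^ (-(k : ℤ) - 1)) 0 r
    simp only [smul_eq_mul] at this
    rw [this, key hq0 hq1 hr (k : ℤ)]
    norm_num
  rw [Finset.sum_congr rfl fun k _ => step3 k]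
  -- Step 4: simplify constants
  have hpi : (2 * Real.pi * Complex.I) ≠ 0 := by
    simp [Real.pi_ne_zero, Complex.I_ne_zero]
  rw [Finset.mul_sum]
  refine Finset.sum_congr rfl fun k _ => ?_
  rw [show (2 * ↑Real.pi * Complex.I)⁻¹ * (c k * (2 * ↑Real.pi * Complex.I
      * ((q ^ ((k : ℝ) ^ 2 / 2) : ℝ) : ℂ)))
    = c k * ((q ^ ((k : ℝ) ^ 2 / 2) : ℝ) : ℂ) * ((2 * ↑Real.pi * Complex.I)
      * (2 * ↑Real.pi * Complex.I)⁻¹) by ring, mul_inv_cancel₀ hpi, mul_one]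
  -- Step 5: the real exponent identity
  have hreal : q ^ (k.choose 2) * X ^ k * q ^ ((k : ℝ) ^ 2 / 2)
      = q ^ ((k : ℤ) ^ 2 - k * N) := by
    have h1 : q ^ (k.choose 2) = q ^ ((k.choose 2 : ℕ) : ℝ) := (Real.rpow_natCast q _).symm
    have h2 : X ^ k = q ^ ((-(N : ℝ) + 1 / 2) * k) := by
      rw [hXdef, ← Real.rpow_natCast X k, hXdef, ← Real.rpow_mul hq0.le]
    rw [h1, h2, ← Real.rpow_add hq0, ← Real.rpow_add hq0]
    rw [show (((k.choose 2 : ℕ) : ℝ) + (-(N : ℝ) + 1 / 2) * k + (k : ℝ) ^ 2 / 2)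
        = (((k : ℤ) ^ 2 - k * N : ℤ) : ℝ) by
      rw [Nat.cast_choose_two]; push_cast; ring]
    exact Real.rpow_intCast q _
  have hck : c k * ((q ^ ((k : ℝ) ^ 2 / 2) : ℝ) : ℂ)
      = ((qbinom q N k : ℝ) : ℂ) * (q : ℂ) ^ ((k : ℤ) ^ 2 - k * N) := by
    simp only [hc, qcoef]
    calc ((qbinom q N k : ℝ) : ℂ) * (q : ℂ) ^ (k.choose 2) * ((X ^ k : ℝ) : ℂ)
          * ((q ^ ((k : ℝ) ^ 2 / 2) : ℝ) : ℂ)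
        = ((qbinom q N k : ℝ) : ℂ)
            * ((q ^ (k.choose 2) * X ^ k * q ^ ((k : ℝ) ^ 2 / 2) : ℝ) : ℂ) := by
          push_cast; ring
      _ = ((qbinom q N k : ℝ) : ℂ) * (q : ℂ) ^ ((k : ℤ) ^ 2 - k * N) := by
          rw [hreal, Complex.ofReal_zpow]
  rw [hck]
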